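/- Let V be a real vector space of finite dimension n ≥ 2 and T : V × V → V an alternating bilinear map. Then T decomposes uniquely as T = T₁ + T₂ where T₁ is an alternating bilinear map with Tr(Y ↦ T₁(X,Y)) = 0 for all X ∈ V, and T₂(X,Y) = α(X)Y − α(Y)X for some α ∈ V*; moreover necessarily α(X) = (1/(n−1))·Tr(Y ↦ T(X,Y)). -/

import Mathlib

open LinearMap Module

lemma trace_smulRight' {V : Type*} [AddCommGroup V] [Module ℝ V]
    [FiniteDimensional ℝ V] (α : V →ₗ[ℝ] ℝ) (X : V) :
    LinearMap.trace ℝ V (α.smulRight X) = α X := by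
  have h : α.smulRight X = dualTensorHom ℝ V V (α ⊗ₜ X) := by
    ext m; simp [dualTensorHom_apply]
  rw [h, LinearMap.trace_eq_contract_apply, contractLeft_apply]

/-- The map `α ↦ (X ↦ Y ↦ α X • Y - α Y • X)`. -/
noncomputable def Sm {V : Type*} [AddCommGroup V] [Module ℝ V]
    (α : V →ₗ[ℝ] ℝ) : V →ₗ[ℝ] V →ₗ[ℝ] V :=
  LinearMap.mk₂ ℝ (fun X Y => α X • Y - α Y • X)
    (fun X X' Y => by simp [add_smul]; abel)
    (fun c X Y => by simp [smul_smul, smul_sub, mul_comm])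
    (fun X Y Y' => by simp [add_smul]; abel)
    (fun c X Y => by simp [smul_smul, smul_sub, mul_comm c])


lemma Sm_apply {V : Type*} [AddCommGroup V] [Module ℝ V]
    (α : V →ₗ[ℝ] ℝ) (X Y : V) : Sm α X Y = α X • Y - α Y • X := rfl

lemma trace_Sm {V : Type*} [AddCommGroup V] [Module ℝ V]
    [FiniteDimensional ℝ V] (α : V →ₗ[ℝ] ℝ) (X : V) :
    LinearMap.trace ℝ V (Sm α X) =
      ((Module.finrank ℝ V : ℝ) - 1) * α X := by
  have h : Sm α X = α X • LinearMap.id - α.smulRight X := by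
    ext Y; simp [Sm_apply]
  rw [h, map_sub, map_smul, trace_smulRight', LinearMap.trace_id]
  simp [smul_eq_mul]; ring

/-- An alternating bilinear map `T : V × V → V` (a torsion-type tensor) on an
`n`-dimensional space, `n ≥ 2`, decomposes uniquely as `T = T₁ + T₂` with `T₁`
alternating and trace-free and `T₂(X,Y) = α(X)Y − α(Y)X` for some `α ∈ V*`;
necessarily `α(X) = (1/(n−1))·Tr(Y ↦ T(X,Y))`. -/
theorem torsion_decomposition {V : Type*} [AddCommGroup V] [Module ℝ V]
    [FiniteDimensional ℝ V]
    (n : ℕ) (hn : n = Module.finrank ℝ V) (hn2 : 2 ≤ n)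
    (T : V →ₗ[ℝ] V →ₗ[ℝ] V)
    (halt : ∀ X : V, T X X = 0) :
    (∃! Tα : (V →ₗ[ℝ] V →ₗ[ℝ] V) × (V →ₗ[ℝ] ℝ),
        (∀ X : V, Tα.1 X X = 0) ∧
        (∀ X : V, LinearMap.trace ℝ V (Tα.1 X) = 0) ∧
        (∀ X Y : V, T X Y = Tα.1 X Y + Tα.2 X • Y - Tα.2 Y • X)) ∧
    (∀ (T₁ : V →ₗ[ℝ] V →ₗ[ℝ] V) (α : V →ₗ[ℝ] ℝ),
        (∀ X : V, T₁ X X = 0) →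
        (∀ X : V, LinearMap.trace ℝ V (T₁ X) = 0) →
        (∀ X Y : V, T X Y = T₁ X Y + α X • Y - α Y • X) →
        ∀ X : V, α X = (1 / ((n : ℝ) - 1)) * LinearMap.trace ℝ V (T X)) := by
  have hne : (n : ℝ) - 1 ≠ 0 := by
    have : (2 : ℝ) ≤ (n : ℝ) := by exact_mod_cast hn2
    linarith
  -- the trace functional required
  set α : V →ₗ[ℝ] ℝ :=
    (1 / ((n : ℝ) - 1)) • ((LinearMap.trace ℝ V).comp T) with hα
  have hαapp : ∀ X, α X = (1 / ((n : ℝ) - 1)) * LinearMap.trace ℝ V (T X) := by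
    intro X; simp [hα, smul_eq_mul]
  set T₁ : V →ₗ[ℝ] V →ₗ[ℝ] V := T - Sm α with hT₁
  have hT₁app : ∀ X Y, T₁ X Y = T X Y - (α X • Y - α Y • X) := by
    intro X Y; simp [hT₁, Sm_apply]
  have htrSm : ∀ (β : V →ₗ[ℝ] ℝ) X,
      LinearMap.trace ℝ V (Sm β X) = ((n : ℝ) - 1) * β X := by
    intro β X; rw [trace_Sm, hn]
  -- key uniqueness computation
  have key : ∀ (T₁' : V →ₗ[ℝ] V →ₗ[ℝ] V) (β : V →ₗ[ℝ] ℝ),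
      (∀ X : V, LinearMap.trace ℝ V (T₁' X) = 0) →
      (∀ X Y : V, T X Y = T₁' X Y + β X • Y - β Y • X) →
      ∀ X : V, β X = (1 / ((n : ℝ) - 1)) * LinearMap.trace ℝ V (T X) := by
    intro T₁' β htr hdec X
    have hTX : T X = T₁' X + Sm β X := by
      ext Y; simp [Sm_apply, hdec X Y]; abel
    have : LinearMap.trace ℝ V (T X) = ((n : ℝ) - 1) * β X := by
      rw [hTX, map_add, htr, htrSm]; ring
    rw [this]; field_simp
  refine ⟨⟨(T₁, α), ⟨?_, ?_, ?_⟩, ?_⟩, fun T₁' β _ => key T₁' β⟩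
  · intro X
    simp [hT₁app, halt X]
  · intro X
    have : T₁ X = T X - Sm α X := by ext Y; simp [hT₁]
    rw [this, map_sub, htrSm, hαapp]
    field_simp
    ring
  · intro X Y; rw [hT₁app]; abel
  · rintro ⟨T₁', β⟩ ⟨h1, h2, h3⟩
    have hβ : β = α := by
      ext X
      rw [key T₁' β h2 h3 X, hαapp]
    have hT' : T₁' = T₁ := by
      ext X Y
      have := h3 X Y
      rw [hβ] at this
      rw [hT₁app]
      rw [this]; abel
    simp [hβ, hT']
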